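/- Let F : [0,1] × (0,1] → ℂ, c < ∞, δ > 0, and suppose: (i) for all t and dyadic scales n, the oscillation of F over any 'box' [j2^{-2n},(j+1)2^{-2n}] × [2^{-n}, 2^{-(n-1)}] is at most c 2^{-nδ}. Then the boundary function γ(t) = lim_{y→0+} F(t,y) exists and is Hölder continuous with exponent δ/2: |γ(t₁) − γ(t₂)| ≤ c' |t₁−t₂|^{δ/2} for a constant c' depending only on c and δ. -/

import Mathlib

open Filter Topology

namespace Stmt16Aux

lemma two_rpow_pos (x : ℝ) : 0 < (2:ℝ) ^ x := Real.rpow_pos_of_pos two_pos x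

lemma two_rpow_cancel (x : ℝ) : (2:ℝ) ^ x * (2:ℝ) ^ (-x) = 1 := by
  rw [← Real.rpow_add two_pos]; simp

lemma two_rpow_anti {x y : ℝ} (h : x ≤ y) : (2:ℝ) ^ (-y) ≤ (2:ℝ) ^ (-x) :=
  Real.rpow_le_rpow_of_exponent_le one_le_two (neg_le_neg h)

/-- the box-oscillation hypothesis -/
def BoxHyp (F : ℝ → ℝ → ℂ) (c δ : ℝ) : Prop :=
  ∀ n : ℕ, 1 ≤ n → ∀ j : ℕ,
    ∀ t₁ ∈ Set.Icc ((j : ℝ) * (2:ℝ) ^ (-(2 * (n:ℝ)))) (((j : ℝ) + 1) * (2:ℝ) ^ (-(2 * (n:ℝ)))),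
    ∀ t₂ ∈ Set.Icc ((j : ℝ) * (2:ℝ) ^ (-(2 * (n:ℝ)))) (((j : ℝ) + 1) * (2:ℝ) ^ (-(2 * (n:ℝ)))),
    ∀ y₁ ∈ Set.Icc ((2:ℝ) ^ (-(n:ℝ))) ((2:ℝ) ^ (-((n:ℝ) - 1))),
    ∀ y₂ ∈ Set.Icc ((2:ℝ) ^ (-(n:ℝ))) ((2:ℝ) ^ (-((n:ℝ) - 1))),
      ‖F t₁ y₁ - F t₂ y₂‖ ≤ c * (2:ℝ) ^ (-(n:ℝ) * δ)

variable {F : ℝ → ℝ → ℂ} {c δ : ℝ}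

lemma rpow_eq_pow (δ : ℝ) (n : ℕ) : (2:ℝ) ^ (-(n:ℝ) * δ) = ((2:ℝ) ^ (-δ)) ^ n := by
  rw [← Real.rpow_natCast ((2:ℝ) ^ (-δ)) n, ← Real.rpow_mul (by norm_num)]
  ring_nf

/-- membership of a point in its own box -/
lemma mem_own_box (n : ℕ) (t : ℝ) (ht : 0 ≤ t) :
    t ∈ Set.Icc ((⌊t * (2:ℝ) ^ (2 * (n:ℝ))⌋₊ : ℝ) * (2:ℝ) ^ (-(2 * (n:ℝ))))
      (((⌊t * (2:ℝ) ^ (2 * (n:ℝ))⌋₊ : ℝ) + 1) * (2:ℝ) ^ (-(2 * (n:ℝ)))) := by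
  set j := ⌊t * (2:ℝ) ^ (2 * (n:ℝ))⌋₊ with hj
  have h1 : (j:ℝ) ≤ t * (2:ℝ) ^ (2 * (n:ℝ)) := Nat.floor_le (by positivity)
  have h2 : t * (2:ℝ) ^ (2 * (n:ℝ)) < (j:ℝ) + 1 := Nat.lt_floor_add_one _
  have hpos := two_rpow_pos (-(2 * (n:ℝ)))
  constructor
  · have := mul_le_mul_of_nonneg_right h1 hpos.le
    rwa [mul_assoc, two_rpow_cancel, mul_one] at this
  · have := mul_le_mul_of_nonneg_right h2.le hpos.le
    rwa [mul_assoc, two_rpow_cancel, mul_one] at this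

/-- vertical: same t, two heights in the same band -/
lemma vert (hF : BoxHyp F c δ) (n : ℕ) (hn : 1 ≤ n) (t : ℝ) (ht : 0 ≤ t)
    {y₁ y₂ : ℝ} (hy₁ : y₁ ∈ Set.Icc ((2:ℝ) ^ (-(n:ℝ))) ((2:ℝ) ^ (-((n:ℝ) - 1))))
    (hy₂ : y₂ ∈ Set.Icc ((2:ℝ) ^ (-(n:ℝ))) ((2:ℝ) ^ (-((n:ℝ) - 1)))) :
    ‖F t y₁ - F t y₂‖ ≤ c * ((2:ℝ) ^ (-δ)) ^ n := by
  have h := hF n hn ⌊t * (2:ℝ) ^ (2 * (n:ℝ))⌋₊ t (mem_own_box n t ht) t (mem_own_box n t ht)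
    y₁ hy₁ y₂ hy₂
  rwa [rpow_eq_pow] at h

/-- horizontal, at most two adjacent boxes -/
lemma horiz2 (hF : BoxHyp F c δ) (hc : 0 ≤ c) (n : ℕ) (hn : 1 ≤ n) {t₁ t₂ : ℝ} (ht₁ : 0 ≤ t₁)
    (hle : t₁ ≤ t₂) (hd : t₂ - t₁ ≤ (2:ℝ) ^ (-(2 * (n:ℝ))))
    {y : ℝ} (hy : y ∈ Set.Icc ((2:ℝ) ^ (-(n:ℝ))) ((2:ℝ) ^ (-((n:ℝ) - 1)))) :
    ‖F t₁ y - F t₂ y‖ ≤ 2 * c * ((2:ℝ) ^ (-δ)) ^ n := by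
  set W := (2:ℝ) ^ (-(2 * (n:ℝ))) with hW
  set j := ⌊t₁ * (2:ℝ) ^ (2 * (n:ℝ))⌋₊ with hj
  have hb₁ := mem_own_box n t₁ ht₁
  have hrpos : (0:ℝ) < ((2:ℝ) ^ (-δ)) ^ n := pow_pos (two_rpow_pos _) n
  have hWpos : (0:ℝ) < W := two_rpow_pos _
  by_cases hcase : t₂ ≤ ((j:ℝ) + 1) * W
  · have h := hF n hn j t₁ hb₁ t₂ ⟨le_trans hb₁.1 hle, hcase⟩ y hy y hy
    rw [rpow_eq_pow] at h
    nlinarith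
  · push_neg at hcase
    have hcast : ((j + 1 : ℕ) : ℝ) = (j:ℝ) + 1 := by push_cast; ring
    have hbp : ((j:ℝ) + 1) * W ∈ Set.Icc ((j:ℝ) * W) (((j:ℝ) + 1) * W) :=
      ⟨by nlinarith, le_refl _⟩
    have hbp' : ((j:ℝ) + 1) * W ∈
        Set.Icc (((j+1:ℕ):ℝ) * W) ((((j+1:ℕ):ℝ) + 1) * W) := by
      rw [hcast]; exact ⟨le_refl _, by nlinarith⟩
    have hbt₂ : t₂ ∈ Set.Icc (((j+1:ℕ):ℝ) * W) ((((j+1:ℕ):ℝ) + 1) * W) := by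
      rw [hcast]
      refine ⟨hcase.le, ?_⟩
      have := hb₁.2
      nlinarith
    have h1 := hF n hn j t₁ hb₁ (((j:ℝ) + 1) * W) hbp y hy y hy
    have h2 := hF n hn (j+1) (((j:ℝ) + 1) * W) hbp' t₂ hbt₂ y hy y hy
    rw [rpow_eq_pow] at h1 h2
    have htri := norm_sub_le_norm_sub_add_norm_sub (F t₁ y) (F (((j:ℝ) + 1) * W) y) (F t₂ y)
    nlinarith

/-- horizontal chaining over k boxes -/
lemma horizChain (hF : BoxHyp F c δ) (hc : 0 ≤ c) (k : ℕ) (n : ℕ) (hn : 1 ≤ n) :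
    ∀ t₁ t₂ : ℝ, 0 ≤ t₁ → t₁ ≤ t₂ → t₂ - t₁ ≤ (k:ℝ) * (2:ℝ) ^ (-(2 * (n:ℝ))) →
    ∀ y ∈ Set.Icc ((2:ℝ) ^ (-(n:ℝ))) ((2:ℝ) ^ (-((n:ℝ) - 1))),
    ‖F t₁ y - F t₂ y‖ ≤ 2 * (k:ℝ) * c * ((2:ℝ) ^ (-δ)) ^ n := by
  induction k with
  | zero =>
    intro t₁ t₂ ht₁ hle hd y hy
    have : t₁ = t₂ := le_antisymm hle (by simpa using hd)
    simp [this]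
  | succ k ih =>
    intro t₁ t₂ ht₁ hle hd y hy
    set W := (2:ℝ) ^ (-(2 * (n:ℝ))) with hW
    have hWpos : (0:ℝ) < W := two_rpow_pos _
    set p := min (t₁ + W) t₂ with hp
    have hp₁ : t₁ ≤ p := le_min (by linarith) hle
    have hp₂ : p ≤ t₂ := min_le_right _ _
    have h1 : ‖F t₁ y - F p y‖ ≤ 2 * c * ((2:ℝ) ^ (-δ)) ^ n :=
      horiz2 hF hc n hn ht₁ hp₁ (by have := min_le_left (t₁ + W) t₂; simp only [← hW]; linarith) hy
    have h2 : ‖F p y - F t₂ y‖ ≤ 2 * (k:ℝ) * c * ((2:ℝ) ^ (-δ)) ^ n := by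
      apply ih p t₂ (le_trans ht₁ hp₁) hp₂ _ y hy
      rcases le_total (t₁ + W) t₂ with h | h
      · rw [hp, min_eq_left h]
        push_cast at hd ⊢
        linarith
      · rw [hp, min_eq_right h]
        simp only [sub_self]
        positivity
    have htri := norm_sub_le_norm_sub_add_norm_sub (F t₁ y) (F p y) (F t₂ y)
    have hrpos : (0:ℝ) < ((2:ℝ) ^ (-δ)) ^ n := pow_pos (two_rpow_pos _) n
    push_cast
    nlinarith

lemma two_rpow_neg_nat (m : ℕ) : (2:ℝ) ^ (-(m:ℝ)) = (1/2:ℝ) ^ m := by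
  rw [Real.rpow_neg (by norm_num), Real.rpow_natCast]
  simp [inv_pow, one_div]

end Stmt16Aux

open Stmt16Aux

/-- Chaining over parabolic Whitney boxes: if the oscillation of `F` over every box
`[j2^{-2n}, (j+1)2^{-2n}] × [2^{-n}, 2^{-(n-1)}]` is at most `c 2^{-nδ}`, then the
boundary function `γ(t) = lim_{y→0+} F(t,y)` exists and is Hölder continuous with
exponent `δ/2`, with constant depending only on `c` and `δ`. -/
theorem stmt_16 (c δ : ℝ) (hc : 0 ≤ c) (hδ : 0 < δ) :
    ∃ c' : ℝ, ∀ F : ℝ → ℝ → ℂ,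
      (∀ n : ℕ, 1 ≤ n → ∀ j : ℕ,
        ∀ t₁ ∈ Set.Icc ((j : ℝ) * (2:ℝ) ^ (-(2 * (n:ℝ)))) (((j : ℝ) + 1) * (2:ℝ) ^ (-(2 * (n:ℝ)))),
        ∀ t₂ ∈ Set.Icc ((j : ℝ) * (2:ℝ) ^ (-(2 * (n:ℝ)))) (((j : ℝ) + 1) * (2:ℝ) ^ (-(2 * (n:ℝ)))),
        ∀ y₁ ∈ Set.Icc ((2:ℝ) ^ (-(n:ℝ))) ((2:ℝ) ^ (-((n:ℝ) - 1))),
        ∀ y₂ ∈ Set.Icc ((2:ℝ) ^ (-(n:ℝ))) ((2:ℝ) ^ (-((n:ℝ) - 1))),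
          ‖F t₁ y₁ - F t₂ y₂‖ ≤ c * (2:ℝ) ^ (-(n:ℝ) * δ)) →
      ∃ γ : ℝ → ℂ,
        (∀ t ∈ Set.Icc (0 : ℝ) 1,
          Tendsto (fun y => F t y) (nhdsWithin 0 (Set.Ioi (0 : ℝ))) (nhds (γ t))) ∧
        ∀ t₁ ∈ Set.Icc (0 : ℝ) 1, ∀ t₂ ∈ Set.Icc (0 : ℝ) 1,
          ‖γ t₁ - γ t₂‖ ≤ c' * |t₁ - t₂| ^ (δ / 2) := by
  classical
  set r := (2:ℝ) ^ (-δ) with hr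
  have hr0 : 0 < r := two_rpow_pos _
  have hr1 : r < 1 := Real.rpow_lt_one_of_one_lt_of_neg one_lt_two (neg_neg_of_pos hδ)
  have h1r : 0 < 1 - r := by linarith
  set C := c * r / (1 - r) with hC
  have hC0 : 0 ≤ C := by positivity
  refine ⟨2 * C + 8 * c, ?_⟩
  intro F hF'
  have hF : BoxHyp F c δ := hF'
  have band_self : ∀ m : ℕ,
      (2:ℝ) ^ (-(m:ℝ)) ∈ Set.Icc ((2:ℝ) ^ (-(m:ℝ))) ((2:ℝ) ^ (-((m:ℝ) - 1))) :=
    fun m => ⟨le_refl _, two_rpow_anti (by linarith)⟩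
  have hstep : ∀ t : ℝ, 0 ≤ t → ∀ m : ℕ,
      dist ((fun k : ℕ => F t ((2:ℝ) ^ (-(k:ℝ)))) m) ((fun k : ℕ => F t ((2:ℝ) ^ (-(k:ℝ)))) (m+1))
        ≤ (c * r) * r ^ m := by
    intro t ht m
    have hcast : ((m+1:ℕ):ℝ) - 1 = (m:ℝ) := by push_cast; ring
    have hmem2 : (2:ℝ) ^ (-(m:ℝ)) ∈
        Set.Icc ((2:ℝ) ^ (-((m+1:ℕ):ℝ))) ((2:ℝ) ^ (-(((m+1:ℕ):ℝ) - 1))) := by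
      rw [hcast]
      exact ⟨two_rpow_anti (by push_cast; linarith), le_refl _⟩
    have h := vert hF (m+1) (by omega) t ht hmem2 (band_self (m+1))
    simp only []
    rw [Complex.dist_eq]
    calc ‖F t ((2:ℝ) ^ (-(m:ℝ))) - F t ((2:ℝ) ^ (-((m+1:ℕ):ℝ)))‖
        ≤ c * r ^ (m+1) := h
      _ = (c * r) * r ^ m := by ring
  have hcauchy : ∀ t : ℝ, 0 ≤ t → CauchySeq (fun k : ℕ => F t ((2:ℝ) ^ (-(k:ℝ)))) :=
    fun t ht => cauchySeq_of_le_geometric r (c * r) hr1 (hstep t ht)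
  set γ : ℝ → ℂ := fun t => limUnder atTop (fun k : ℕ => F t ((2:ℝ) ^ (-(k:ℝ)))) with hγdef
  have hγ : ∀ t : ℝ, 0 ≤ t →
      Tendsto (fun k : ℕ => F t ((2:ℝ) ^ (-(k:ℝ)))) atTop (nhds (γ t)) :=
    fun t ht => (hcauchy t ht).tendsto_limUnder
  have hdistγ : ∀ t : ℝ, 0 ≤ t → ∀ m : ℕ,
      dist (F t ((2:ℝ) ^ (-(m:ℝ)))) (γ t) ≤ C * r ^ m := by
    intro t ht m
    have h := dist_le_of_le_geometric_of_tendsto r (c * r) hr1 (hstep t ht) (hγ t ht) m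
    calc dist (F t ((2:ℝ) ^ (-(m:ℝ)))) (γ t) ≤ (c * r) * r ^ m / (1 - r) := h
      _ = C * r ^ m := by rw [hC]; ring
  refine ⟨γ, ?_, ?_⟩
  · -- existence of the boundary limit
    intro t ht
    rw [Metric.tendsto_nhdsWithin_nhds]
    intro ε hε
    obtain ⟨n₀, hn₀⟩ : ∃ n₀ : ℕ, r ^ n₀ < ε / ((c + C) + 1) :=
      exists_pow_lt_of_lt_one (by positivity) hr1
    refine ⟨(2:ℝ) ^ (-(n₀:ℝ)), two_rpow_pos _, ?_⟩
    intro y hy hdist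
    have hy0 : (0:ℝ) < y := hy
    have hylt : y < (2:ℝ) ^ (-(n₀:ℝ)) := by
      rw [Real.dist_eq, sub_zero, abs_of_pos hy0] at hdist; exact hdist
    have hex : ∃ m : ℕ, (2:ℝ) ^ (-(m:ℝ)) ≤ y := by
      obtain ⟨m, hm⟩ := exists_pow_lt_of_lt_one hy0 (by norm_num : (1/2:ℝ) < 1)
      exact ⟨m, by rw [two_rpow_neg_nat]; exact hm.le⟩
    set m := Nat.find hex with hmdef
    have hm1 : (2:ℝ) ^ (-(m:ℝ)) ≤ y := Nat.find_spec hex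
    have hmgt : n₀ < m := by
      by_contra h
      push_neg at h
      have : (2:ℝ) ^ (-(n₀:ℝ)) ≤ (2:ℝ) ^ (-(m:ℝ)) :=
        two_rpow_anti (by exact_mod_cast h)
      linarith
    have hm0 : 1 ≤ m := by omega
    have hm2 : y ≤ (2:ℝ) ^ (-((m:ℝ) - 1)) := by
      have hlt := Nat.find_min hex (show m - 1 < m by omega)
      push_neg at hlt
      have hcast : ((m-1:ℕ):ℝ) = (m:ℝ) - 1 := by
        push_cast [Nat.cast_sub hm0]; ring
      rw [hcast] at hlt
      exact hlt.le
    have h1 : ‖F t y - F t ((2:ℝ) ^ (-(m:ℝ)))‖ ≤ c * r ^ m :=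
      vert hF m hm0 t ht.1 ⟨hm1, hm2⟩ (band_self m)
    have h1' : dist (F t y) (F t ((2:ℝ) ^ (-(m:ℝ)))) ≤ c * r ^ m := by
      rw [Complex.dist_eq]; exact h1
    have h2 := hdistγ t ht.1 m
    have htri := dist_triangle (F t y) (F t ((2:ℝ) ^ (-(m:ℝ)))) (γ t)
    have hpowle : r ^ m ≤ r ^ n₀ := pow_le_pow_of_le_one hr0.le hr1.le hmgt.le
    have hKnn : (0:ℝ) ≤ c + C := by linarith
    have hlast : (c + C) * r ^ n₀ < ε := by
      have h3 : (c + C) * r ^ n₀ ≤ (c + C) * (ε / ((c + C) + 1)) :=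
        mul_le_mul_of_nonneg_left hn₀.le hKnn
      have h4 : (c + C) * (ε / ((c + C) + 1)) < ε := by
        rw [mul_div_assoc', div_lt_iff₀ (by linarith)]
        nlinarith
      linarith
    have hmul : (c + C) * r ^ m ≤ (c + C) * r ^ n₀ :=
      mul_le_mul_of_nonneg_left hpowle hKnn
    calc dist (F t y) (γ t)
        ≤ dist (F t y) (F t ((2:ℝ) ^ (-(m:ℝ)))) + dist (F t ((2:ℝ) ^ (-(m:ℝ)))) (γ t) := htri
      _ ≤ c * r ^ m + C * r ^ m := by linarith
      _ = (c + C) * r ^ m := by ring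
      _ < ε := by linarith
  · -- Hölder continuity
    have key : ∀ t₁ ∈ Set.Icc (0:ℝ) 1, ∀ t₂ ∈ Set.Icc (0:ℝ) 1, t₁ ≤ t₂ →
        ‖γ t₁ - γ t₂‖ ≤ (2 * C + 8 * c) * (t₂ - t₁) ^ (δ / 2) := by
      intro t₁ h₁ t₂ h₂ hle
      rcases eq_or_lt_of_le hle with rfl | hlt
      · simp [Real.zero_rpow (by positivity : δ / 2 ≠ 0)]
      · set d := t₂ - t₁ with hd
        have hd0 : 0 < d := by simp only [hd]; linarith
        have hd1 : d ≤ 1 := by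
          have := h₁.1; have := h₂.2; simp only [hd]; linarith
        have hex : ∃ k : ℕ, (2:ℝ) ^ (-(2 * ((k+1:ℕ):ℝ))) < d := by
          obtain ⟨m, hm⟩ := exists_pow_lt_of_lt_one hd0 (by norm_num : (1/2:ℝ) < 1)
          refine ⟨m, lt_of_le_of_lt ?_ (by rw [← two_rpow_neg_nat] at hm; exact hm)⟩
          apply two_rpow_anti
          push_cast; linarith
        set k₀ := Nat.find hex with hk₀def
        set n : ℕ := k₀ + 1 with hndef
        have hn1 : 1 ≤ n := by omega
        have hA : (2:ℝ) ^ (-(2 * (n:ℝ))) < d := by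
          show (2:ℝ) ^ (-(2 * ((k₀+1:ℕ):ℝ))) < d
          exact Nat.find_spec hex
        have hB : d ≤ 4 * (2:ℝ) ^ (-(2 * (n:ℝ))) := by
          have h4 : (4:ℝ) * (2:ℝ) ^ (-(2 * (n:ℝ))) = (2:ℝ) ^ (-(2 * (n:ℝ)) + 2) := by
            rw [Real.rpow_add two_pos]
            have : (2:ℝ) ^ (2:ℝ) = 4 := by
              rw [show ((2:ℝ):ℝ) = ((2:ℕ):ℝ) by norm_num, Real.rpow_natCast]; norm_num
            rw [this]; ring
          rcases Nat.eq_zero_or_pos k₀ with h0 | h0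
          · have hn1' : n = 1 := by omega
            have : (4:ℝ) * (2:ℝ) ^ (-(2 * (n:ℝ))) = 1 := by
              rw [h4, hn1']
              norm_num
            linarith
          · have hmin := Nat.find_min hex (show k₀ - 1 < k₀ by omega)
            push_neg at hmin
            have hcast : (k₀ - 1 + 1 : ℕ) = k₀ := by omega
            rw [hcast] at hmin
            have heq : (2:ℝ) ^ (-(2 * (k₀:ℝ))) = 4 * (2:ℝ) ^ (-(2 * (n:ℝ))) := by
              rw [h4]
              congr 1
              simp only [hndef]
              push_cast; ring
            linarith [hmin, heq ▸ hmin]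
        have hmid : ‖F t₁ ((2:ℝ) ^ (-(n:ℝ))) - F t₂ ((2:ℝ) ^ (-(n:ℝ)))‖
            ≤ 2 * (4:ℕ) * c * r ^ n :=
          horizChain hF hc 4 n hn1 t₁ t₂ h₁.1 hle
            (by simp only [Nat.cast_ofNat]; linarith [hB, hd]) _ (band_self n)
        have hg1 := hdistγ t₁ h₁.1 n
        have hg2 := hdistγ t₂ h₂.1 n
        have hrn : r ^ n ≤ d ^ (δ / 2) := by
          have heq : r ^ n = ((2:ℝ) ^ (-(2 * (n:ℝ)))) ^ (δ / 2) := by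
            rw [← Real.rpow_natCast r n, hr, ← Real.rpow_mul (by norm_num),
              ← Real.rpow_mul (by norm_num)]
            congr 1; ring
          rw [heq]
          exact Real.rpow_le_rpow (two_rpow_pos _).le hA.le (by positivity)
        have htri := dist_triangle4 (γ t₁) (F t₁ ((2:ℝ) ^ (-(n:ℝ))))
          (F t₂ ((2:ℝ) ^ (-(n:ℝ)))) (γ t₂)
        have hmid' : dist (F t₁ ((2:ℝ) ^ (-(n:ℝ)))) (F t₂ ((2:ℝ) ^ (-(n:ℝ)))) ≤ 8 * c * r ^ n := by
          rw [Complex.dist_eq]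
          calc ‖F t₁ ((2:ℝ) ^ (-(n:ℝ))) - F t₂ ((2:ℝ) ^ (-(n:ℝ)))‖
              ≤ 2 * (4:ℕ) * c * r ^ n := hmid
            _ = 8 * c * r ^ n := by norm_num
        have hfin : dist (γ t₁) (γ t₂) ≤ (2 * C + 8 * c) * r ^ n := by
          have e1 := dist_comm (γ t₁) (F t₁ ((2:ℝ) ^ (-(n:ℝ))))
          have e2 := dist_comm (F t₂ ((2:ℝ) ^ (-(n:ℝ)))) (γ t₂)
          linarith
        have hmono : (2 * C + 8 * c) * r ^ n ≤ (2 * C + 8 * c) * d ^ (δ / 2) :=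
          mul_le_mul_of_nonneg_left hrn (by linarith)
        rw [← Complex.dist_eq]
        linarith
    intro t₁ h₁ t₂ h₂
    rcases le_total t₁ t₂ with h | h
    · have := key t₁ h₁ t₂ h₂ h
      rwa [abs_sub_comm, abs_of_nonneg (by linarith)]
    · have := key t₂ h₂ t₁ h₁ h
      rw [show γ t₂ - γ t₁ = -(γ t₁ - γ t₂) by ring] at this
      rw [norm_neg] at this
      rwa [abs_of_nonneg (by linarith)]
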